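/- Let N ≥ 4 be an integer divisible by 4. Let D be the N/4 × N/4 real matrix with entries D_{pq} = cos(4π(p−1)q/N); let P_4 be the N/4 × N/4 matrix whose first row has all entries equal to 2 and whose p-th row, for p ≥ 2, has entry 1 in column 1, entry 3 in column p, and entry 2 in every other column; and let D̄ be the N/4 × N/4 matrix with entries D̄_{pq} = (8/N)·(1 − (1/2)[q=1])·(1 − (1/2)[p=N/4])·cos(4π(q−1)p/N), where [·] is the indicator. Then (P_4 D) D̄ = D̄ (P_4 D) = I; in particular P_4 D is invertible with inverse D̄. -/

import Mathlib

open Real Finset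

lemma cosIntPi (m : ℤ) : Real.cos (m * Real.pi) = if Even m then 1 else -1 := by
  rcases Int.even_or_odd m with he | ho
  · obtain ⟨t, ht⟩ := he
    rw [if_pos ⟨t, ht⟩]
    have h1 : (m : ℝ) * Real.pi = (t : ℝ) * (2 * Real.pi) := by
      have : (m : ℝ) = t + t := by exact_mod_cast ht
      rw [this]; ring
    rw [h1, Real.cos_int_mul_two_pi]
  · obtain ⟨t, ht⟩ := ho
    rw [if_neg (by rw [Int.even_iff]; omega)]
    have h1 : (m : ℝ) * Real.pi = (t : ℝ) * (2 * Real.pi) + Real.pi := by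
      have : (m : ℝ) = 2 * t + 1 := by exact_mod_cast ht
      rw [this]; ring
    rw [h1, Real.cos_add_pi, Real.cos_int_mul_two_pi]

lemma cosSum (M : ℕ) (hM : 0 < M) (m : ℤ) :
    ∑ k ∈ Finset.range M, Real.cos (Real.pi * m * k / M) =
      if (2 * (M : ℤ)) ∣ m then (M : ℝ) else if Even m then 0 else 1 := by
  have hMR : (M : ℝ) ≠ 0 := Nat.cast_ne_zero.mpr hM.ne'
  by_cases hdvd : (2 * (M : ℤ)) ∣ m
  · obtain ⟨t, ht⟩ := hdvd
    rw [if_pos ⟨t, ht⟩]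
    have : ∀ k ∈ Finset.range M, Real.cos (Real.pi * m * k / M) = 1 := by
      intro k _
      have h1 : Real.pi * m * k / M = ((t * k : ℤ) : ℝ) * (2 * Real.pi) := by
        have hm : (m : ℝ) = 2 * M * t := by exact_mod_cast ht
        push_cast
        field_simp [hm]; rw [hm]; ring
      rw [h1, Real.cos_int_mul_two_pi]
    rw [Finset.sum_congr rfl this]; simp
  · rw [if_neg hdvd]
    set α : ℝ := Real.pi * m / M with hα
    have hπ : Real.pi ≠ 0 := Real.pi_ne_zero
    have hs : Real.sin (α / 2) ≠ 0 := by
      intro h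
      obtain ⟨n, hn⟩ := Real.sin_eq_zero_iff.mp h
      apply hdvd
      refine ⟨n, ?_⟩
      have h2 : Real.pi * ((n : ℝ) * (2 * M)) = Real.pi * m := by
        rw [hα] at hn; field_simp at hn; linear_combination Real.pi * hn
      have h3 : (n : ℝ) * (2 * M) = m := mul_left_cancel₀ hπ h2
      have : (m : ℝ) = 2 * M * n := by linarith
      exact_mod_cast this
    have key : ∀ k : ℕ, Real.sin ((k + 1 : ℝ) * α - α / 2) - Real.sin ((k : ℝ) * α - α / 2)
        = 2 * Real.sin (α / 2) * Real.cos (Real.pi * m * k / M) := by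
      intro k
      rw [Real.sin_sub_sin]
      congr 2
      · ring
      · rw [hα]; ring
    have tele : ∑ k ∈ Finset.range M, (2 * Real.sin (α / 2) * Real.cos (Real.pi * m * k / M))
        = Real.sin ((M : ℝ) * α - α / 2) - Real.sin ((0 : ℝ) * α - α / 2) := by
      calc ∑ k ∈ Finset.range M, (2 * Real.sin (α / 2) * Real.cos (Real.pi * m * k / M))
          = ∑ k ∈ Finset.range M, (Real.sin (((k : ℕ) + 1 : ℝ) * α - α / 2)
              - Real.sin ((k : ℝ) * α - α / 2)) := by
            refine Finset.sum_congr rfl fun k _ => ?_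
            exact (key k).symm
        _ = _ := by
            have := Finset.sum_range_sub (fun k : ℕ => Real.sin ((k : ℝ) * α - α / 2)) M
            push_cast at this ⊢
            convert this using 2
      
    have hMα : (M : ℝ) * α = (m : ℝ) * Real.pi := by rw [hα]; field_simp
    have hend : Real.sin ((M : ℝ) * α - α / 2)
        = - Real.cos ((m : ℤ) * Real.pi) * Real.sin (α / 2) := by
      rw [hMα, Real.sin_sub, Real.sin_int_mul_pi]
      push_cast
      ring
    have h0 : Real.sin ((0 : ℝ) * α - α / 2) = - Real.sin (α / 2) := by
      rw [zero_mul, zero_sub, Real.sin_neg]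
    have h2 : 2 * Real.sin (α / 2) * (∑ k ∈ Finset.range M, Real.cos (Real.pi * m * k / M))
        = (1 - Real.cos ((m : ℤ) * Real.pi)) * Real.sin (α / 2) := by
      rw [Finset.mul_sum, tele, hend, h0]; ring
    have hS := mul_left_cancel₀ (mul_ne_zero two_ne_zero hs)
      (h2.trans (by ring : (1 - Real.cos ((m : ℤ) * Real.pi)) * Real.sin (α / 2)
        = 2 * Real.sin (α / 2) * ((1 - Real.cos ((m : ℤ) * Real.pi)) / 2)))
    rw [hS, cosIntPi]
    by_cases he : Even m <;> simp [he] <;> norm_num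

lemma Gsum (M : ℕ) (hM : 0 < M) (m : ℤ) :
    ∑ k ∈ Finset.range M, (1 - (1/2 : ℝ) * (if k + 1 = M then 1 else 0))
        * Real.cos (Real.pi * m * (k + 1) / M)
      = (if (2 * (M : ℤ)) ∣ m then (M : ℝ) else 0) - 1/2 := by
  have hMR : (M : ℝ) ≠ 0 := Nat.cast_ne_zero.mpr hM.ne'
  set f : ℕ → ℝ := fun j => Real.cos (Real.pi * m * j / M) with hf
  have hfM : f M = if Even m then 1 else -1 := by
    rw [hf]
    show Real.cos (Real.pi * m * M / M) = _
    rw [show Real.pi * m * M / M = (m : ℝ) * Real.pi by field_simp, cosIntPi]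
  have hf0 : f 0 = 1 := by
    rw [hf]; show Real.cos (Real.pi * m * (0:ℕ) / M) = 1; norm_num
  have hstep : ∀ k ∈ Finset.range M,
      (1 - (1/2 : ℝ) * (if k + 1 = M then 1 else 0)) * Real.cos (Real.pi * m * (k + 1) / M)
        = f (k + 1) - (if k = M - 1 then (1/2) * f M else 0) := by
    intro k hk
    have hkM : k < M := Finset.mem_range.mp hk
    have hcast : Real.cos (Real.pi * m * (k + 1) / M) = f (k + 1) := by
      rw [hf]; push_cast; ring_nf
    by_cases h : k + 1 = M
    · rw [if_pos h, if_pos (by omega), hcast, h]; ring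
    · rw [if_neg h, if_neg (by omega), hcast]; ring
  rw [Finset.sum_congr rfl hstep, Finset.sum_sub_distrib,
    Finset.sum_ite_eq' (Finset.range M) (M - 1) (fun _ => (1/2) * f M),
    if_pos (Finset.mem_range.mpr (by omega))]
  have h1 := Finset.sum_range_succ' f M
  have h2 := Finset.sum_range_succ f M
  have h3 : ∑ k ∈ Finset.range M, f (k + 1)
      = (∑ k ∈ Finset.range M, f k) + f M - f 0 := by
    rw [h1] at h2; linarith
  rw [h3, hf0]
  have h4 : ∑ k ∈ Finset.range M, f k
      = if (2 * (M : ℤ)) ∣ m then (M : ℝ) else if Even m then 0 else 1 :=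
    cosSum M hM m
  rw [h4, hfM]
  by_cases hdvd : (2 * (M : ℤ)) ∣ m
  · obtain ⟨t, ht⟩ := hdvd
    have heven : Even m := ⟨M * t, by rw [ht]; ring⟩
    simp [show (2 * (M:ℤ)) ∣ m from ⟨t, ht⟩, heven]
  · by_cases he : Even m <;> simp [hdvd, he] <;> ring

lemma Hsum (M : ℕ) (hM : 0 < M) (m : ℤ) :
    ∑ k ∈ Finset.range M, (1 - (1/2 : ℝ) * (if k = 0 then 1 else 0))
        * Real.cos (Real.pi * m * k / M)
      = (if (2 * (M : ℤ)) ∣ m then (M : ℝ) else 0)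
        - (if Even m then (1:ℝ) else -1) / 2 := by
  have hMR : (M : ℝ) ≠ 0 := Nat.cast_ne_zero.mpr hM.ne'
  have hstep : ∀ k ∈ Finset.range M,
      (1 - (1/2 : ℝ) * (if k = 0 then 1 else 0)) * Real.cos (Real.pi * m * k / M)
        = Real.cos (Real.pi * m * k / M)
          - (if k = 0 then (1/2) * Real.cos (Real.pi * m * k / M) else 0) := by
    intro k _
    by_cases h : k = 0 <;> simp [h] <;> ring
  rw [Finset.sum_congr rfl hstep, Finset.sum_sub_distrib,
    Finset.sum_ite_eq' (Finset.range M) 0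
      (fun k => (1/2) * Real.cos (Real.pi * m * (k:ℕ) / M)),
    if_pos (Finset.mem_range.mpr hM), cosSum M hM m]
  norm_num
  by_cases hdvd : (2 * (M : ℤ)) ∣ m
  · obtain ⟨t, ht⟩ := hdvd
    have heven : Even m := ⟨M * t, by rw [ht]; ring⟩
    simp [show (2 * (M:ℤ)) ∣ m from ⟨t, ht⟩, heven]
  · by_cases he : Even m <;> simp [hdvd, he] <;> ring

lemma A_entry (M : ℕ) (hM : 0 < M) (p k : Fin M) :
    ∑ q : Fin M, (if (p : ℕ) = 0 then (2:ℝ) else if (q : ℕ) = 0 then 1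
        else if q = p then 3 else 2)
      * Real.cos (Real.pi * (q : ℕ) * ((k : ℕ) + 1) / M)
    = (if Even (k : ℕ) then (1:ℝ) else -1)
      + Real.cos (Real.pi * (p : ℕ) * ((k : ℕ) + 1) / M) := by
  have hkM : (k : ℕ) < M := k.isLt
  have hpM : (p : ℕ) < M := p.isLt
  have hMR : ((M : ℕ) : ℝ) ≠ 0 := Nat.cast_ne_zero.mpr hM.ne'
  set c : ℕ → ℝ := fun q => Real.cos (Real.pi * (((k : ℕ) + 1 : ℤ)) * q / M) with hc
  have hcq : ∀ q : ℕ, Real.cos (Real.pi * (q : ℝ) * ((k : ℕ) + 1) / M) = c q := by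
    intro q; rw [hc]; show Real.cos _ = Real.cos _; congr 1; push_cast; ring
  have hCsum : ∑ q ∈ Finset.range M, c q
      = if Even ((k:ℕ) + 1) then (0:ℝ) else 1 := by
    rw [hc, cosSum M hM ((k : ℕ) + 1 : ℤ)]
    have hnd : ¬ ((2 * (M : ℤ)) ∣ ((k : ℕ) + 1 : ℤ)) := by
      intro hd
      have := Int.le_of_dvd (by positivity) hd
      omega
    rw [if_neg hnd]
    by_cases he : Even (k : ℕ)
    · rw [if_neg (by simp [Int.odd_coe_nat, Nat.not_even_iff_odd, he]),
        if_neg (by simp [Nat.even_add_one, he])]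
    · rw [if_pos (by simp [Int.odd_coe_nat, Nat.not_even_iff_odd.mp he, he]),
        if_pos (by simp [Nat.even_add_one, he])]
  have hc0 : c 0 = 1 := by rw [hc]; norm_num
  by_cases hp : (p : ℕ) = 0
  · have hsum : ∑ q : Fin M, (if (p : ℕ) = 0 then (2:ℝ) else if (q : ℕ) = 0 then 1
        else if q = p then 3 else 2) * Real.cos (Real.pi * (q : ℕ) * ((k : ℕ) + 1) / M)
        = ∑ q ∈ Finset.range M, 2 * c q := by
      rw [← Fin.sum_univ_eq_sum_range (fun q => 2 * c q) M]
      refine Finset.sum_congr rfl fun q _ => ?_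
      rw [hcq, if_pos hp]
    rw [hsum, ← Finset.mul_sum, hCsum]
    have hcp : Real.cos (Real.pi * (p : ℕ) * ((k : ℕ) + 1) / ((M : ℕ) : ℝ)) = 1 := by
      rw [hp]; norm_num
    rw [hcp]
    rcases Nat.even_or_odd (k : ℕ) with he | ho
    · rw [if_neg (by simp [Nat.even_add_one, he]), if_pos he]; norm_num
    · rw [if_pos (by simp [Nat.even_add_one, Nat.not_even_iff_odd.mpr ho]),
        if_neg (Nat.not_even_iff_odd.mpr ho)]; norm_num
  · have hsum : ∑ q : Fin M, (if (p : ℕ) = 0 then (2:ℝ) else if (q : ℕ) = 0 then 1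
        else if q = p then 3 else 2) * Real.cos (Real.pi * (q : ℕ) * ((k : ℕ) + 1) / M)
        = ∑ q ∈ Finset.range M,
            (2 * c q + (if q = 0 then -c q else 0) + (if q = (p : ℕ) then c q else 0)) := by
      rw [← Fin.sum_univ_eq_sum_range
        (fun q => 2 * c q + (if q = 0 then -c q else 0) + (if q = (p : ℕ) then c q else 0)) M]
      refine Finset.sum_congr rfl fun q _ => ?_
      rw [hcq, if_neg hp]
      by_cases hq0 : (q : ℕ) = 0
      · rw [if_pos hq0, if_pos hq0, if_neg (by omega)]; ring
      · rw [if_neg hq0, if_neg hq0]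
        by_cases hqp : q = p
        · rw [if_pos hqp, if_pos (by rw [hqp])]; ring
        · rw [if_neg hqp, if_neg (fun h => hqp (Fin.ext h))]; ring
    rw [hsum, Finset.sum_add_distrib, Finset.sum_add_distrib, ← Finset.mul_sum, hCsum,
      Finset.sum_ite_eq' (Finset.range M) 0 (fun q => -c q),
      Finset.sum_ite_eq' (Finset.range M) (p : ℕ) (fun q => c q),
      if_pos (Finset.mem_range.mpr hM), if_pos (Finset.mem_range.mpr hpM), hc0,
      hcq (p : ℕ)]
    rcases Nat.even_or_odd (k : ℕ) with he | ho
    · rw [if_neg (by simp [Nat.even_add_one, he]), if_pos he]; ring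
    · rw [if_pos (by simp [Nat.even_add_one, Nat.not_even_iff_odd.mpr ho]),
        if_neg (Nat.not_even_iff_odd.mpr ho)]; ring


lemma prodEntry1 (M : ℕ) (hM : 0 < M) (p r : Fin M) :
    ∑ k : Fin M,
      ((if Even (k : ℕ) then (1:ℝ) else -1)
          + Real.cos (Real.pi * (p : ℕ) * ((k : ℕ) + 1) / M))
        * ((2 / (M:ℝ)) * (1 - (1/2) * (if (r : ℕ) = 0 then 1 else 0))
          * (1 - (1/2) * (if (k : ℕ) + 1 = M then 1 else 0))
          * Real.cos (Real.pi * (r : ℕ) * ((k : ℕ) + 1) / M))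
      = if p = r then 1 else 0 := by
  have hpM : (p : ℕ) < M := p.isLt
  have hrM : (r : ℕ) < M := r.isLt
  have hMR : ((M : ℕ) : ℝ) ≠ 0 := Nat.cast_ne_zero.mpr hM.ne'
  set w : ℕ → ℝ := fun k => 1 - (1/2 : ℝ) * (if k + 1 = M then 1 else 0) with hw
  set g : ℤ → ℕ → ℝ := fun m k => w k * Real.cos (Real.pi * m * ((k:ℕ) + 1) / M) with hg
  have hfin : ∑ k : Fin M,
      ((if Even (k : ℕ) then (1:ℝ) else -1)
          + Real.cos (Real.pi * (p : ℕ) * ((k : ℕ) + 1) / M))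
        * ((2 / (M:ℝ)) * (1 - (1/2) * (if (r : ℕ) = 0 then 1 else 0))
          * (1 - (1/2) * (if (k : ℕ) + 1 = M then 1 else 0))
          * Real.cos (Real.pi * (r : ℕ) * ((k : ℕ) + 1) / M))
      = ∑ k ∈ Finset.range M,
        ((if Even k then (1:ℝ) else -1)
          + Real.cos (Real.pi * (p : ℕ) * ((k : ℕ) + 1) / M))
        * ((2 / (M:ℝ)) * (1 - (1/2) * (if (r : ℕ) = 0 then 1 else 0))
          * (1 - (1/2) * (if (k : ℕ) + 1 = M then 1 else 0))
          * Real.cos (Real.pi * (r : ℕ) * ((k : ℕ) + 1) / M)) :=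
    Fin.sum_univ_eq_sum_range (fun k : ℕ =>
      ((if Even k then (1:ℝ) else -1)
          + Real.cos (Real.pi * (p : ℕ) * ((k:ℝ) + 1) / M))
        * ((2 / (M:ℝ)) * (1 - (1/2) * (if (r : ℕ) = 0 then 1 else 0))
          * (1 - (1/2) * (if k + 1 = M then 1 else 0))
          * Real.cos (Real.pi * (r : ℕ) * ((k:ℝ) + 1) / M))) M
  rw [hfin]
  have key : ∀ k ∈ Finset.range M,
      ((if Even k then (1:ℝ) else -1)
          + Real.cos (Real.pi * (p : ℕ) * ((k : ℕ) + 1) / M))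
        * ((2 / (M:ℝ)) * (1 - (1/2) * (if (r : ℕ) = 0 then 1 else 0))
          * (1 - (1/2) * (if (k : ℕ) + 1 = M then 1 else 0))
          * Real.cos (Real.pi * (r : ℕ) * ((k : ℕ) + 1) / M))
      = (2 / (M:ℝ)) * (1 - (1/2) * (if (r : ℕ) = 0 then 1 else 0)) * (1/2)
        * (g (((p:ℕ):ℤ) - ((r:ℕ):ℤ)) k + g (((p:ℕ):ℤ) + ((r:ℕ):ℤ)) k
            - g ((M:ℤ) - ((r:ℕ):ℤ)) k - g ((M:ℤ) + ((r:ℕ):ℤ)) k) := by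
    intro k _
    have hEk : (if Even k then (1:ℝ) else -1)
        = - Real.cos (Real.pi * (M:ℝ) * ((k:ℕ) + 1) / M) := by
      rw [show Real.pi * (M:ℝ) * ((k:ℕ) + 1) / M = (((k:ℕ) + 1 : ℕ) : ℤ) * Real.pi by
        push_cast; field_simp, cosIntPi]
      have hek1 : Even (((k + 1 : ℕ)) : ℤ) ↔ ¬ Even k := by
        rw [Int.even_coe_nat, Nat.even_add_one]
      rcases Nat.even_or_odd k with he | ho
      · rw [if_pos he, if_neg (fun hcon => (hek1.mp hcon) he)]; norm_num
      · rw [if_neg (Nat.not_even_iff_odd.mpr ho),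
          if_pos (hek1.mpr (Nat.not_even_iff_odd.mpr ho))]
    rw [hg]
    simp only
    rw [show Real.pi * ((((p:ℕ):ℤ) - ((r:ℕ):ℤ) : ℤ) : ℝ) * ((k:ℕ) + 1) / M
        = Real.pi * (p : ℕ) * ((k:ℕ) + 1) / M - Real.pi * (r : ℕ) * ((k:ℕ) + 1) / M by
      push_cast; ring]
    rw [show Real.pi * ((((p:ℕ):ℤ) + ((r:ℕ):ℤ) : ℤ) : ℝ) * ((k:ℕ) + 1) / M
        = Real.pi * (p : ℕ) * ((k:ℕ) + 1) / M + Real.pi * (r : ℕ) * ((k:ℕ) + 1) / M by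
      push_cast; ring]
    rw [show Real.pi * (((M:ℤ) - ((r:ℕ):ℤ) : ℤ) : ℝ) * ((k:ℕ) + 1) / M
        = Real.pi * (M:ℝ) * ((k:ℕ) + 1) / M - Real.pi * (r : ℕ) * ((k:ℕ) + 1) / M by
      push_cast; ring]
    rw [show Real.pi * (((M:ℤ) + ((r:ℕ):ℤ) : ℤ) : ℝ) * ((k:ℕ) + 1) / M
        = Real.pi * (M:ℝ) * ((k:ℕ) + 1) / M + Real.pi * (r : ℕ) * ((k:ℕ) + 1) / M by
      push_cast; ring]
    rw [hEk, Real.cos_sub, Real.cos_add, Real.cos_sub, Real.cos_add]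
    ring
  rw [Finset.sum_congr rfl key, ← Finset.mul_sum]
  have hsplit : ∑ k ∈ Finset.range M,
      (g (((p:ℕ):ℤ) - ((r:ℕ):ℤ)) k + g (((p:ℕ):ℤ) + ((r:ℕ):ℤ)) k
        - g ((M:ℤ) - ((r:ℕ):ℤ)) k - g ((M:ℤ) + ((r:ℕ):ℤ)) k)
      = (∑ k ∈ Finset.range M, g (((p:ℕ):ℤ) - ((r:ℕ):ℤ)) k)
        + (∑ k ∈ Finset.range M, g (((p:ℕ):ℤ) + ((r:ℕ):ℤ)) k)
        - (∑ k ∈ Finset.range M, g ((M:ℤ) - ((r:ℕ):ℤ)) k)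
        - (∑ k ∈ Finset.range M, g ((M:ℤ) + ((r:ℕ):ℤ)) k) := by
    rw [Finset.sum_sub_distrib, Finset.sum_sub_distrib, Finset.sum_add_distrib]
  rw [hsplit, hg]
  simp only
  rw [Gsum M hM _, Gsum M hM _, Gsum M hM _, Gsum M hM _]
  have h3 : ¬ (2 * (M:ℤ)) ∣ ((M:ℤ) - ((r:ℕ):ℤ)) := by
    intro h
    have := Int.le_of_dvd (by omega) h
    omega
  have h4 : ¬ (2 * (M:ℤ)) ∣ ((M:ℤ) + ((r:ℕ):ℤ)) := by
    intro h
    have := Int.le_of_dvd (by omega) h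
    omega
  rw [if_neg h3, if_neg h4]
  by_cases hpr : (p : ℕ) = (r : ℕ)
  · have h1 : (2 * (M:ℤ)) ∣ (((p:ℕ):ℤ) - ((r:ℕ):ℤ)) := by
      rw [show (((p:ℕ):ℤ) - ((r:ℕ):ℤ)) = 0 by omega]
      exact dvd_zero _
    rw [if_pos h1, if_pos (Fin.ext hpr)]
    by_cases hr0 : (r : ℕ) = 0
    · have h2 : (2 * (M:ℤ)) ∣ (((p:ℕ):ℤ) + ((r:ℕ):ℤ)) := by
        rw [show (((p:ℕ):ℤ) + ((r:ℕ):ℤ)) = 0 by omega]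
        exact dvd_zero _
      rw [if_pos h2, if_pos hr0]
      field_simp
      ring
    · have h2 : ¬ (2 * (M:ℤ)) ∣ (((p:ℕ):ℤ) + ((r:ℕ):ℤ)) := by
        intro h
        have := Int.le_of_dvd (by omega) h
        omega
      rw [if_neg h2, if_neg hr0]
      field_simp
      ring
  · have h1 : ¬ (2 * (M:ℤ)) ∣ (((p:ℕ):ℤ) - ((r:ℕ):ℤ)) := by
      intro h
      rcases lt_trichotomy ((p:ℕ):ℤ) ((r:ℕ):ℤ) with hlt | heq | hgt
      · have := Int.le_of_dvd (by omega) (dvd_neg.mpr h)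
        omega
      · omega
      · have := Int.le_of_dvd (by omega) h
        omega
    have h2 : ¬ (2 * (M:ℤ)) ∣ (((p:ℕ):ℤ) + ((r:ℕ):ℤ)) := by
      intro h
      have := Int.le_of_dvd (by omega) h
      omega
    rw [if_neg h1, if_neg h2,
      if_neg (show ¬ (p = r) from fun h => hpr (by rw [h]))]
    ring


lemma prodEntry2 (M : ℕ) (hM : 0 < M) (p r : Fin M) :
    ∑ k : Fin M,
      ((2 / (M:ℝ)) * (1 - (1/2) * (if (k : ℕ) = 0 then 1 else 0))
          * (1 - (1/2) * (if (p : ℕ) + 1 = M then 1 else 0))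
          * Real.cos (Real.pi * (k : ℕ) * ((p : ℕ) + 1) / M))
        * ((if Even (r : ℕ) then (1:ℝ) else -1)
          + Real.cos (Real.pi * (k : ℕ) * ((r : ℕ) + 1) / M))
      = if p = r then 1 else 0 := by
  have hpM : (p : ℕ) < M := p.isLt
  have hrM : (r : ℕ) < M := r.isLt
  have hMR : ((M : ℕ) : ℝ) ≠ 0 := Nat.cast_ne_zero.mpr hM.ne'
  set h : ℤ → ℕ → ℝ := fun m k =>
    (1 - (1/2 : ℝ) * (if k = 0 then 1 else 0)) * Real.cos (Real.pi * m * k / M) with hh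
  set wp : ℝ := 1 - (1/2 : ℝ) * (if (p : ℕ) + 1 = M then 1 else 0) with hwp
  set Er : ℝ := if Even (r : ℕ) then (1:ℝ) else -1 with hEr
  have hfin : ∑ k : Fin M,
      ((2 / (M:ℝ)) * (1 - (1/2) * (if (k : ℕ) = 0 then 1 else 0))
          * wp * Real.cos (Real.pi * (k : ℕ) * ((p : ℕ) + 1) / M))
        * (Er + Real.cos (Real.pi * (k : ℕ) * ((r : ℕ) + 1) / M))
      = ∑ k ∈ Finset.range M,
        ((2 / (M:ℝ)) * (1 - (1/2) * (if k = 0 then 1 else 0))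
          * wp * Real.cos (Real.pi * (k : ℕ) * ((p : ℕ) + 1) / M))
        * (Er + Real.cos (Real.pi * (k : ℕ) * ((r : ℕ) + 1) / M)) :=
    Fin.sum_univ_eq_sum_range (fun k : ℕ =>
      ((2 / (M:ℝ)) * (1 - (1/2) * (if k = 0 then 1 else 0))
          * wp * Real.cos (Real.pi * (k:ℝ) * ((p : ℕ) + 1) / M))
        * (Er + Real.cos (Real.pi * (k:ℝ) * ((r : ℕ) + 1) / M))) M
  rw [hfin]
  have key : ∀ k ∈ Finset.range M,
      ((2 / (M:ℝ)) * (1 - (1/2) * (if k = 0 then 1 else 0))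
          * wp * Real.cos (Real.pi * (k : ℕ) * ((p : ℕ) + 1) / M))
        * (Er + Real.cos (Real.pi * (k : ℕ) * ((r : ℕ) + 1) / M))
      = ((2 / (M:ℝ)) * wp * Er) * h (((p:ℕ):ℤ) + 1) k
        + ((2 / (M:ℝ)) * wp * (1/2)) * h (((p:ℕ):ℤ) - ((r:ℕ):ℤ)) k
        + ((2 / (M:ℝ)) * wp * (1/2)) * h (((p:ℕ):ℤ) + ((r:ℕ):ℤ) + 2) k := by
    intro k _
    rw [hh]
    simp only
    rw [show Real.pi * ((((p:ℕ):ℤ) + 1 : ℤ) : ℝ) * k / M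
        = Real.pi * (k : ℕ) * ((p : ℕ) + 1) / M by push_cast; ring]
    rw [show Real.pi * ((((p:ℕ):ℤ) - ((r:ℕ):ℤ) : ℤ) : ℝ) * k / M
        = Real.pi * (k : ℕ) * ((p : ℕ) + 1) / M
          - Real.pi * (k : ℕ) * ((r : ℕ) + 1) / M by push_cast; ring]
    rw [show Real.pi * ((((p:ℕ):ℤ) + ((r:ℕ):ℤ) + 2 : ℤ) : ℝ) * k / M
        = Real.pi * (k : ℕ) * ((p : ℕ) + 1) / M
          + Real.pi * (k : ℕ) * ((r : ℕ) + 1) / M by push_cast; ring]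
    rw [Real.cos_sub, Real.cos_add]
    ring
  rw [Finset.sum_congr rfl key, Finset.sum_add_distrib, Finset.sum_add_distrib,
    ← Finset.mul_sum, ← Finset.mul_sum, ← Finset.mul_sum, hh]
  simp only
  rw [Hsum M hM _, Hsum M hM _, Hsum M hM _]
  have hd0 : ¬ (2 * (M:ℤ)) ∣ (((p:ℕ):ℤ) + 1) := by
    intro hd
    have := Int.le_of_dvd (by omega) hd
    omega
  have hc2 : (2 * (M:ℤ)) ∣ (((p:ℕ):ℤ) - ((r:ℕ):ℤ)) ↔ (p:ℕ) = (r:ℕ) := by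
    constructor
    · intro hd
      rcases lt_trichotomy ((p:ℕ):ℤ) ((r:ℕ):ℤ) with hlt | heq | hgt
      · have := Int.le_of_dvd (by omega) (dvd_neg.mpr hd)
        omega
      · omega
      · have := Int.le_of_dvd (by omega) hd
        omega
    · intro hpr
      rw [show (((p:ℕ):ℤ) - ((r:ℕ):ℤ)) = 0 by omega]
      exact dvd_zero _
  have hc3 : (2 * (M:ℤ)) ∣ (((p:ℕ):ℤ) + ((r:ℕ):ℤ) + 2)
      ↔ ((p:ℕ) = (r:ℕ) ∧ (p:ℕ) + 1 = M) := by
    constructor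
    · intro hd
      have := Int.le_of_dvd (by omega) hd
      constructor <;> omega
    · rintro ⟨h1, h2⟩
      exact ⟨1, by omega⟩
  have hc4 : Even (((p:ℕ):ℤ) + 1) ↔ ¬ Even (p:ℕ) := by
    rw [Int.even_add_one, Int.even_coe_nat]
  have hc5 : Even (((p:ℕ):ℤ) - ((r:ℕ):ℤ)) ↔ (Even (p:ℕ) ↔ Even (r:ℕ)) := by
    rw [Int.even_sub, Int.even_coe_nat, Int.even_coe_nat]
  have hc6 : Even (((p:ℕ):ℤ) + ((r:ℕ):ℤ) + 2) ↔ (Even (p:ℕ) ↔ Even (r:ℕ)) := by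
    rw [Int.even_add, Int.even_add, Int.even_coe_nat, Int.even_coe_nat]
    simp
  rw [if_neg hd0]
  simp only [hc2, hc3, hc4, hc5, hc6, Fin.ext_iff, hwp, hEr]
  by_cases hpr : (p:ℕ) = (r:ℕ)
  · have hiff : Even (p:ℕ) ↔ Even (r:ℕ) := by rw [hpr]
    rw [if_pos hpr, if_pos hpr, if_pos hiff]
    by_cases hpe : Even (p:ℕ)
    · rw [if_pos (hiff.mp hpe), if_neg (not_not_intro hpe)]
      by_cases hp1 : (p:ℕ) + 1 = M
      · rw [if_pos (show (p:ℕ) = (r:ℕ) ∧ (p:ℕ) + 1 = M from ⟨hpr, hp1⟩), if_pos hp1]; field_simp; ring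
      · rw [if_neg (show ¬((p:ℕ) = (r:ℕ) ∧ (p:ℕ) + 1 = M) from fun hco => hp1 hco.2), if_neg hp1]; field_simp; ring
    · rw [if_neg (show ¬ Even (r:ℕ) from fun hre => hpe (hiff.mpr hre)), if_pos hpe]
      by_cases hp1 : (p:ℕ) + 1 = M
      · rw [if_pos (show (p:ℕ) = (r:ℕ) ∧ (p:ℕ) + 1 = M from ⟨hpr, hp1⟩), if_pos hp1]; field_simp; ring
      · rw [if_neg (show ¬((p:ℕ) = (r:ℕ) ∧ (p:ℕ) + 1 = M) from fun hco => hp1 hco.2), if_neg hp1]; field_simp; ring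
  · rw [if_neg hpr, if_neg hpr, if_neg (show ¬((p:ℕ) = (r:ℕ) ∧ (p:ℕ) + 1 = M) from fun hco => hpr hco.1)]
    by_cases hpe : Even (p:ℕ) <;> by_cases hre : Even (r:ℕ)
    · rw [if_pos hre, if_neg (not_not_intro hpe), if_pos (iff_of_true hpe hre)]
      ring
    · rw [if_neg hre, if_neg (not_not_intro hpe),
        if_neg (show ¬(Even (p:ℕ) ↔ Even (r:ℕ)) from fun hco => hre (hco.mp hpe))]
      ring
    · rw [if_pos hre, if_pos hpe, if_neg (show ¬(Even (p:ℕ) ↔ Even (r:ℕ)) from fun hco => hpe (hco.mpr hre))]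
      ring
    · rw [if_neg hre, if_pos hpe, if_pos (iff_of_false hpe hre)]
      ring

/-- The `N/4 × N/4` matrix `D` with 1-indexed entries
`D_{pq} = cos(4π(p−1)q/N)`; the `Fin` index `p` corresponds to row `p+1`. -/
noncomputable def Dmat (N : ℕ) : Matrix (Fin (N / 4)) (Fin (N / 4)) ℝ :=
  fun p q => Real.cos (4 * Real.pi * (p : ℕ) * ((q : ℕ) + 1) / N)

/-- The `N/4 × N/4` matrix `P₄`: the first row has all entries `2`; for `p ≥ 2`
the `p`-th row has entry `1` in column `1`, entry `3` in column `p`, and entry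
`2` in every other column. -/
def P4mat (N : ℕ) : Matrix (Fin (N / 4)) (Fin (N / 4)) ℝ := fun p q =>
  if (p : ℕ) = 0 then 2
  else if (q : ℕ) = 0 then 1
  else if q = p then 3
  else 2

/-- The `N/4 × N/4` matrix `D̄` with 1-indexed entries
`D̄_{pq} = (8/N)·(1 − (1/2)[q=1])·(1 − (1/2)[p=N/4])·cos(4π(q−1)p/N)`. -/
noncomputable def DbarMat (N : ℕ) : Matrix (Fin (N / 4)) (Fin (N / 4)) ℝ :=
  fun p q => (8 / (N : ℝ)) * (1 - (1 / 2) * (if (q : ℕ) = 0 then 1 else 0)) *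
    (1 - (1 / 2) * (if (p : ℕ) + 1 = N / 4 then 1 else 0)) *
    Real.cos (4 * Real.pi * (q : ℕ) * ((p : ℕ) + 1) / N)


lemma A_apply (N : ℕ) (hN4 : 4 ∣ N) (hN : 4 ≤ N) (p k : Fin (N / 4)) :
    (P4mat N * Dmat N) p k
      = (if Even (k : ℕ) then (1:ℝ) else -1)
        + Real.cos (Real.pi * (p : ℕ) * ((k : ℕ) + 1) / ((N / 4 : ℕ) : ℝ)) := by
  have hM : 0 < N / 4 := by omega
  have hMR : ((N / 4 : ℕ) : ℝ) ≠ 0 := Nat.cast_ne_zero.mpr hM.ne'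
  have hNR : (N : ℝ) = 4 * ((N / 4 : ℕ) : ℝ) := by
    obtain ⟨c, rfl⟩ := hN4
    rw [Nat.mul_div_cancel_left c (by norm_num)]
    push_cast; ring
  rw [Matrix.mul_apply, ← A_entry (N / 4) hM p k]
  refine Finset.sum_congr rfl fun q _ => ?_
  show P4mat N p q * Dmat N q k = _
  unfold P4mat Dmat
  congr 1
  rw [hNR]
  congr 1
  field_simp

theorem P4D_mul_DbarMat (N : ℕ) (hN4 : 4 ∣ N) (hN : 4 ≤ N) :
    (P4mat N * Dmat N) * DbarMat N = 1 ∧ DbarMat N * (P4mat N * Dmat N) = 1 ∧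
    IsUnit (P4mat N * Dmat N) ∧ (P4mat N * Dmat N)⁻¹ = DbarMat N := by
  have hM : 0 < N / 4 := by omega
  have hMR : ((N / 4 : ℕ) : ℝ) ≠ 0 := Nat.cast_ne_zero.mpr hM.ne'
  have hMpos : (0:ℝ) < ((N / 4 : ℕ) : ℝ) := by positivity
  have hNR : (N : ℝ) = 4 * ((N / 4 : ℕ) : ℝ) := by
    obtain ⟨c, rfl⟩ := hN4
    rw [Nat.mul_div_cancel_left c (by norm_num)]
    push_cast; ring
  have h8 : (8:ℝ) / (4 * ((N / 4 : ℕ) : ℝ)) = 2 / ((N / 4 : ℕ) : ℝ) := by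
    rw [div_eq_div_iff (by positivity) hMR]; ring
  have h1 : (P4mat N * Dmat N) * DbarMat N = 1 := by
    ext p r
    rw [Matrix.mul_apply, Matrix.one_apply, ← prodEntry1 (N / 4) hM p r]
    refine Finset.sum_congr rfl fun k _ => ?_
    rw [A_apply N hN4 hN p k]
    congr 1
    show DbarMat N k r = _
    unfold DbarMat
    rw [hNR, h8,
      show (4:ℝ) * Real.pi * (r : ℕ) * ((k : ℕ) + 1) / (4 * ((N / 4 : ℕ) : ℝ))
        = Real.pi * (r : ℕ) * ((k : ℕ) + 1) / ((N / 4 : ℕ) : ℝ) by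
        field_simp]
  have h2 : DbarMat N * (P4mat N * Dmat N) = 1 := by
    ext p r
    rw [Matrix.mul_apply, Matrix.one_apply, ← prodEntry2 (N / 4) hM p r]
    refine Finset.sum_congr rfl fun k _ => ?_
    rw [A_apply N hN4 hN k r]
    congr 1
    show DbarMat N p k = _
    unfold DbarMat
    rw [hNR, h8,
      show (4:ℝ) * Real.pi * (k : ℕ) * ((p : ℕ) + 1) / (4 * ((N / 4 : ℕ) : ℝ))
        = Real.pi * (k : ℕ) * ((p : ℕ) + 1) / ((N / 4 : ℕ) : ℝ) by
        field_simp]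
  exact ⟨h1, h2, ⟨⟨_, _, h1, h2⟩, rfl⟩, Matrix.inv_eq_right_inv h1⟩
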